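/- (Completeness of the LTS w.r.t. the abstract bundle semantics) Let C be a choreography and B ∈ ⟦C⟧. If B\[μ] is defined, then there exists a choreography C' with C —μ→ C'. -/

import Mathlib

/-- Choreography mini-language: `C ::= Σᵢ ρ1 → ρ2 : opᵢ⟨M̃ᵢ⟩. Cᵢ | 0`.
A `comm ρ1 ρ2 bs` is a finite nondeterministic sum of interactions from role
`ρ1` to role `ρ2`, each branch carrying an operation label, a message tuple,
and a continuation. -/
inductive Chor (R O M : Type) : Type where
  | zero : Chor R O M
  | comm : R → R → List (O × List M × Chor R O M) → Chor R O M

/-- Interaction labels `μ = (ρ1, ρ2, op, M̃)`. -/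
abbrev CLabel (R O M : Type) := R × R × O × List M

/-- LTS rule C-Com: a branch is selected nondeterministically. -/
inductive CStep {R O M : Type} : Chor R O M → CLabel R O M → Chor R O M → Prop where
  | comm {ρ1 ρ2 : R} {bs : List (O × List M × Chor R O M)} {op : O}
      {ms : List M} {c : Chor R O M} (h : (op, ms, c) ∈ bs) :
      CStep (Chor.comm ρ1 ρ2 bs) (ρ1, ρ2, op, ms) c

/-- Maximal LTS traces: sequences of transitions ending at `0`. -/
inductive MaxTrace {R O M : Type} : Chor R O M → List (CLabel R O M) → Prop where
  | nil : MaxTrace Chor.zero []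
  | cons {C C' : Chor R O M} {μ : CLabel R O M} {tr : List (CLabel R O M)} :
      CStep C μ C' → MaxTrace C' tr → MaxTrace C (μ :: tr)

/-- Nodes of abstract bundles: `Sum.inl (i, true)` / `Sum.inl (i, false)` are
the transmission / reception nodes of the `i`-th interaction, and `Sum.inr ρ`
is the terminal fresh event `e^ρ` of role `ρ`. -/
abbrev ANode (R : Type) := (ℕ × Bool) ⊕ R

/-- Abstract messages: an interaction message `op⟨M̃⟩` or a terminal event `e^ρ`. -/
abbrev AMsg (R O M : Type) := (O × List M) ⊕ R

/-- Abstract bundle environments `(B, who)`: a counter `k` of interactions so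
far, a node set, strand edges `⇒_B`, transmission edges `→_B`, the message of
each node, and the map `who` giving the first node of each role's strand. -/
structure AEnv (R O M : Type) where
  k : ℕ
  nodes : Set (ANode R)
  edgeS : ANode R → ANode R → Prop
  edgeM : ANode R → ANode R → Prop
  msg : ANode R → Option (AMsg R O M)
  who : R → ANode R

variable {R O M : Type}

/-- The prefixing operation `(B, who)[μ]`: a fresh transmission node is added
to the front of the sender's strand, a fresh matching reception node to the
front of the receiver's strand, joined by a transmission edge, and `who` is
updated accordingly. -/
def prefixApply [DecidableEq R] (E : AEnv R O M) (μ : CLabel R O M) : AEnv R O M :=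
  let n1 : ANode R := Sum.inl (E.k, true)
  let n2 : ANode R := Sum.inl (E.k, false)
  { k := E.k + 1
    nodes := insert n1 (insert n2 E.nodes)
    edgeS := fun a b =>
      E.edgeS a b ∨ (a = n1 ∧ b = E.who μ.1) ∨ (a = n2 ∧ b = E.who μ.2.1)
    edgeM := fun a b => E.edgeM a b ∨ (a = n1 ∧ b = n2)
    msg := fun n => if n = n1 ∨ n = n2 then some (Sum.inl (μ.2.2.1, μ.2.2.2))
      else E.msg n
    who := fun ρ => if ρ = μ.1 then n1 else if ρ = μ.2.1 then n2 else E.who ρ }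

/-- The bundle environment for `0`: one fresh terminal event `e^ρ` per role. -/
def zeroEnv : AEnv R O M where
  k := 0
  nodes := {n | ∃ ρ : R, n = Sum.inr ρ}
  edgeS := fun _ _ => False
  edgeM := fun _ _ => False
  msg := fun n => match n with
    | Sum.inr ρ => some (Sum.inr ρ)
    | Sum.inl _ => none
  who := fun ρ => Sum.inr ρ

mutual
/-- The abstract bundle semantics `⟦C⟧` (rules ABS-Zero and ABS-Com). -/
def absSem [DecidableEq R] : Chor R O M → Set (AEnv R O M)
  | Chor.zero => {zeroEnv}
  | Chor.comm ρ1 ρ2 bs => absSemList ρ1 ρ2 bs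

/-- Semantics of a sum of branches: the union over the branches of the
prefixed bundles of each continuation. -/
def absSemList [DecidableEq R] (ρ1 ρ2 : R) :
    List (O × List M × Chor R O M) → Set (AEnv R O M)
  | [] => ∅
  | (op, ms, c) :: rest =>
      (fun E => prefixApply E (ρ1, ρ2, op, ms)) '' absSem c ∪
        absSemList ρ1 ρ2 rest
end

/-- Well-formed choreographies: every sum `Σᵢ` ranges over a non-empty set of
branches (as in the grammar, a sum has at least one summand). -/
inductive NoEmptySum {R O M : Type} : Chor R O M → Prop where
  | zero : NoEmptySum Chor.zero
  | comm {ρ1 ρ2 : R} {bs : List (O × List M × Chor R O M)} (hne : bs ≠ [])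
      (hrec : ∀ b ∈ bs, NoEmptySum b.2.2) : NoEmptySum (Chor.comm ρ1 ρ2 bs)

mutual
/-- In any bundle of `⟦C⟧`, the strand heads `who ρ` only point to
interaction nodes with index below the counter `k`. -/
theorem whoBound [DecidableEq R] : ∀ (c : Chor R O M), ∀ E ∈ absSem c,
    ∀ ρ j b, E.who ρ = Sum.inl (j, b) → j < E.k
  | Chor.zero => by
      intro E hE ρ j b h
      simp only [absSem, Set.mem_singleton_iff] at hE
      subst hE
      simp [zeroEnv] at h
  | Chor.comm ρ1 ρ2 bs => fun E hE => whoBoundList ρ1 ρ2 bs E hE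

theorem whoBoundList [DecidableEq R] : ∀ (ρ1 ρ2 : R)
    (bs : List (O × List M × Chor R O M)), ∀ E ∈ absSemList ρ1 ρ2 bs,
    ∀ ρ j b, E.who ρ = Sum.inl (j, b) → j < E.k
  | _, _, [] => by intro E hE; simp [absSemList] at hE
  | ρ1, ρ2, (op, ms, c) :: rest => by
      intro E hE ρ j b h
      simp only [absSemList, Set.mem_union, Set.mem_image] at hE
      rcases hE with ⟨E', hE', rfl⟩ | hE'
      · simp only [prefixApply] at h ⊢
        split at h
        · cases h; omega
        · split at h
          · cases h; omega
          · exact Nat.lt_succ_of_lt (whoBound c E' hE' ρ j b h)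
      · exact whoBoundList ρ1 ρ2 rest E hE' ρ j b h
end

mutual
/-- In any bundle of `⟦C⟧`, strand edges only leave interaction nodes with
index below the counter `k`. -/
theorem edgeSBound [DecidableEq R] : ∀ (c : Chor R O M), ∀ E ∈ absSem c,
    ∀ x y, E.edgeS x y → ∃ j b', x = Sum.inl (j, b') ∧ j < E.k
  | Chor.zero => by
      intro E hE x y h
      simp only [absSem, Set.mem_singleton_iff] at hE
      subst hE; simp [zeroEnv] at h
  | Chor.comm ρ1 ρ2 bs => fun E hE => edgeSBoundList ρ1 ρ2 bs E hE

theorem edgeSBoundList [DecidableEq R] : ∀ (ρ1 ρ2 : R)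
    (bs : List (O × List M × Chor R O M)), ∀ E ∈ absSemList ρ1 ρ2 bs,
    ∀ x y, E.edgeS x y → ∃ j b', x = Sum.inl (j, b') ∧ j < E.k
  | _, _, [] => by intro E hE; simp [absSemList] at hE
  | ρ1, ρ2, (op, ms, c) :: rest => by
      intro E hE x y h
      simp only [absSemList, Set.mem_union, Set.mem_image] at hE
      rcases hE with ⟨E', hE', rfl⟩ | hE'
      · simp only [prefixApply] at h ⊢
        rcases h with h | ⟨rfl, -⟩ | ⟨rfl, -⟩
        · obtain ⟨j, b', rfl, hj⟩ := edgeSBound c E' hE' x y h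
          exact ⟨j, b', rfl, Nat.lt_succ_of_lt hj⟩
        · exact ⟨E'.k, true, rfl, Nat.lt_succ_self _⟩
        · exact ⟨E'.k, false, rfl, Nat.lt_succ_self _⟩
      · exact edgeSBoundList ρ1 ρ2 rest E hE' x y h
end

mutual
/-- In any bundle of `⟦C⟧`, the map `who` is injective. -/
theorem whoInj [DecidableEq R] : ∀ (c : Chor R O M), ∀ E ∈ absSem c,
    ∀ ρ σ, E.who ρ = E.who σ → ρ = σ
  | Chor.zero => by
      intro E hE ρ σ h
      simp only [absSem, Set.mem_singleton_iff] at hE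
      subst hE; simpa [zeroEnv] using h
  | Chor.comm ρ1 ρ2 bs => fun E hE => whoInjList ρ1 ρ2 bs E hE

theorem whoInjList [DecidableEq R] : ∀ (ρ1 ρ2 : R)
    (bs : List (O × List M × Chor R O M)), ∀ E ∈ absSemList ρ1 ρ2 bs,
    ∀ ρ σ, E.who ρ = E.who σ → ρ = σ
  | _, _, [] => by intro E hE; simp [absSemList] at hE
  | ρ1, ρ2, (op, ms, c) :: rest => by
      intro E hE ρ σ h
      simp only [absSemList, Set.mem_union, Set.mem_image] at hE
      rcases hE with ⟨E', hE', rfl⟩ | hE'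
      · simp only [prefixApply] at h
        split_ifs at h with h1 h2 h3 h3 h4 h4 <;>
          first
          | (subst_vars; rfl)
          | simp at h
          | exact absurd (whoBound c E' hE' _ _ _ h.symm) (lt_irrefl _)
          | exact absurd (whoBound c E' hE' _ _ _ h) (lt_irrefl _)
          | exact whoInj c E' hE' ρ σ h
      · exact whoInjList ρ1 ρ2 rest E hE' ρ σ h
end

/-- If two prefixings agree and the second environment comes from the
semantics, the labels agree. -/
theorem prefix_inj_label [DecidableEq R] {B₀ E : AEnv R O M}
    {μ ν : CLabel R O M} {c : Chor R O M} (hE : E ∈ absSem c)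
    (h : prefixApply B₀ μ = prefixApply E ν) : μ = ν := by
  obtain ⟨a, b, o, m⟩ := μ
  obtain ⟨ρ1, ρ2, op, ms⟩ := ν
  have hk : B₀.k = E.k := by
    have := congrArg AEnv.k h
    simpa [prefixApply] using this
  have hwho := congrArg AEnv.who h
  have hwa := congrFun hwho a
  have hwb := congrFun hwho b
  simp only [prefixApply, hk] at hwa hwb
  rw [if_true] at hwa
  have ha : a = ρ1 := by
    by_contra hne
    rw [if_neg hne] at hwa
    by_cases h2 : a = ρ2
    · rw [if_pos h2] at hwa; simp at hwa
    · rw [if_neg h2] at hwa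
      exact absurd (whoBound c E hE a E.k true hwa.symm) (lt_irrefl _)
  have hb : b = ρ2 := by
    by_cases hba : b = a
    · -- self-communication: use the strand edges
      have hedge := congrArg AEnv.edgeS h
      have noE : ∀ y, ¬ E.edgeS (Sum.inl (E.k, true)) y ∧
          ¬ E.edgeS (Sum.inl (E.k, false)) y := by
        intro y
        constructor <;> intro hc <;>
          obtain ⟨j, b', hx, hj⟩ := edgeSBound c E hE _ y hc <;>
          simp_all
      have e1 : (prefixApply B₀ (a, b, o, m)).edgeS
          (Sum.inl (B₀.k, true)) (B₀.who a) := by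
        simp [prefixApply]
      have e2 : (prefixApply B₀ (a, b, o, m)).edgeS
          (Sum.inl (B₀.k, false)) (B₀.who b) := by
        simp [prefixApply]
      rw [h] at e1 e2
      simp only [prefixApply, hk] at e1 e2
      rcases e1 with e1 | ⟨-, e1⟩ | ⟨e1, -⟩
      · exact absurd e1 (noE _).1
      · rcases e2 with e2 | ⟨e2, -⟩ | ⟨-, e2⟩
        · exact absurd e2 (noE _).2
        · simp at e2
        · rw [hba] at e2
          have hr : ρ1 = ρ2 := whoInj c E hE ρ1 ρ2 (e1.symm.trans e2)
          rw [hba, ha, hr]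
      · simp at e1
    · rw [if_neg hba, if_true] at hwb
      by_cases h1 : b = ρ1
      · exfalso; rw [if_pos h1] at hwb; simp at hwb
      · rw [if_neg h1] at hwb
        by_contra h2
        rw [if_neg h2] at hwb
        exact absurd (whoBound c E hE b E.k false hwb.symm) (lt_irrefl _)
  have hmsg := congrFun (congrArg AEnv.msg h) (Sum.inl (E.k, true))
  simp [prefixApply, hk] at hmsg
  subst ha hb
  simp [hmsg.1, hmsg.2]

theorem lts_complete_list [DecidableEq R] {ρ1 ρ2 : R}
    {bs : List (O × List M × Chor R O M)} {μ : CLabel R O M} {B : AEnv R O M}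
    (hB : B ∈ absSemList ρ1 ρ2 bs) {B₀ : AEnv R O M}
    (hdef : B = prefixApply B₀ μ) :
    ∃ C' : Chor R O M, CStep (Chor.comm ρ1 ρ2 bs) μ C' := by
  induction bs with
  | nil => simp [absSemList] at hB
  | cons hd tl ih =>
    obtain ⟨op, ms, c⟩ := hd
    simp only [absSemList, Set.mem_union, Set.mem_image] at hB
    rcases hB with ⟨E', hE', hEq⟩ | hB'
    · have : μ = (ρ1, ρ2, op, ms) :=
        prefix_inj_label hE' (hdef.symm.trans hEq.symm)
      subst this
      exact ⟨c, CStep.comm List.mem_cons_self⟩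
    · obtain ⟨C', hC'⟩ := ih hB'
      cases hC' with
      | comm hmem => exact ⟨_, CStep.comm (List.mem_cons_of_mem _ hmem)⟩

/-- Completeness of the LTS w.r.t. the abstract bundle semantics
(Theorem 1(2)): if `B ∈ ⟦C⟧` and `B\[μ]` is defined (i.e. `B` arises from some
bundle `B₀` by prefixing with `μ`), then `C` can make the transition `μ`. -/
theorem lts_complete_absSem [DecidableEq R] {C : Chor R O M}
    {μ : CLabel R O M} {B : AEnv R O M}
    (hB : B ∈ absSem C) (hdef : ∃ B₀ : AEnv R O M, B = prefixApply B₀ μ) :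
    ∃ C' : Chor R O M, CStep C μ C' := by
  obtain ⟨B₀, hdef⟩ := hdef
  cases C with
  | zero =>
    exfalso
    simp only [absSem, Set.mem_singleton_iff] at hB
    have := congrFun (congrArg AEnv.msg (hB ▸ hdef)) (Sum.inl (B₀.k, true))
    simp [zeroEnv, prefixApply] at this
  | comm ρ1 ρ2 bs => exact lts_complete_list hB hdef
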